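/- Let 𝔄 be a C*-algebra, let A ∈ 𝔄 be a normal element (A A* = A* A), and let B ∈ 𝔄 be such that A B = 0 and B A = 0. Then A B* = 0 and B* A = 0; in particular A and B are orthogonal, i.e. A B = B A = A B* = B* A = 0. -/
import Mathlib


/-- In a C*-algebra, if `A` is normal, `A * B = 0` and `B * A = 0`, then
`A * star B = 0` and `star B * A = 0`; in particular `A` and `B` are orthogonal. -/
theorem normal_mul_eq_zero_mul_eq_zero_orthogonal
    {𝔄 : Type*} [NonUnitalNormedRing 𝔄] [StarRing 𝔄] [CStarRing 𝔄]
    [CompleteSpace 𝔄]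
    (A B : 𝔄) (hA : A * star A = star A * A)
    (hAB : A * B = 0) (hBA : B * A = 0) :
    A * star B = 0 ∧ star B * A = 0 := by
  have h1 : star A * B = 0 := by
    have hn : ‖star A * B‖ * ‖star A * B‖ = 0 := by
      rw [← CStarRing.norm_star_mul_self]
      have e1 : star (star A * B) * (star A * B) = star B * (A * star A) * B := by
        simp [mul_assoc]
      have e2 : star B * (star A * A) * B = star (A * B) * (A * B) := by
        simp [mul_assoc]
      rw [e1, hA, e2, hAB]
      simp
    have := mul_self_eq_zero.mp hn
    exact norm_eq_zero.mp this
  have h2 : B * star A = 0 := by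
    have hn : ‖B * star A‖ * ‖B * star A‖ = 0 := by
      rw [← CStarRing.norm_self_mul_star]
      have e1 : (B * star A) * star (B * star A) = B * (star A * A) * star B := by
        simp [mul_assoc]
      have e2 : B * (A * star A) * star B = (B * A) * star (B * A) := by
        simp [mul_assoc]
      rw [e1, ← hA, e2, hBA]
      simp
    have := mul_self_eq_zero.mp hn
    exact norm_eq_zero.mp this
  constructor
  · have := congrArg star h2
    simpa using this
  · have := congrArg star h1
    simpa using this
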